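/- For every β ∈ (β̄, μ_1) there exists a matrix T ∈ SO(n) (a real orthogonal n × n matrix of determinant 1) such that T⁻¹·C(β)·T = diag(3, f(β), …, f(β)). -/

import Mathlib

open Matrix

private lemma vmv_mul {m : Type*} [Fintype m] (a b c d : m → ℝ) :
    Matrix.vecMulVec a b * Matrix.vecMulVec c d = (b ⬝ᵥ c) • Matrix.vecMulVec a d := by
  ext i j
  simp only [Matrix.mul_apply, Matrix.vecMulVec_apply, Matrix.smul_apply, smul_eq_mul,
    dotProduct]
  rw [Finset.sum_mul]
  exact Finset.sum_congr rfl fun k _ => by ring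

private lemma vmv_transpose {m : Type*} (a : m → ℝ) :
    (Matrix.vecMulVec a a)ᵀ = Matrix.vecMulVec a a := by
  ext i j; simp [Matrix.vecMulVec_apply, mul_comm]

set_option maxHeartbeats 1000000 in
/-- For every `β ∈ (β̄, μ 0)` there exists `T ∈ SO(n)` (real orthogonal with
determinant 1) such that `T⁻¹ C(β) T = diag(3, f(β), …, f(β))`. -/
theorem stmt_11 (n : ℕ) (hn : 2 ≤ n) (μ : Fin n → ℝ) (hμpos : ∀ k, 0 < μ k)
    (hμmono : Monotone μ) (g : ℝ → ℝ)
    (hg : ∀ β : ℝ, g β = 1 + β * ∑ k, 1 / (μ k - β))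
    (βbar : ℝ) (hβbar : βbar < 0) (hβbarzero : g βbar = 0)
    (β : ℝ) (hβ : β ∈ Set.Ioo βbar (μ ⟨0, by omega⟩))
    (D : Matrix (Fin n) (Fin n) ℝ)
    (hD : ∀ i j, D i j =
      if i = j then μ i / (μ i - β) else β / Real.sqrt ((μ i - β) * (μ j - β)))
    (C : Matrix (Fin n) (Fin n) ℝ) (hC : C = 1 + (2 / g β) • D)
    (f : ℝ) (hf : f = 1 + 2 / g β) :
    ∃ T : Matrix (Fin n) (Fin n) ℝ,
      T * T.transpose = 1 ∧ T.det = 1 ∧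
      T⁻¹ * C * T =
        Matrix.diagonal (fun i : Fin n => if i = ⟨0, by omega⟩ then 3 else f) := by
  have hn0 : 0 < n := by omega
  set i0 : Fin n := ⟨0, by omega⟩ with hi0
  set i1 : Fin n := ⟨1, by omega⟩ with hi1
  have hi01 : i0 ≠ i1 := by simp [hi0, hi1, Fin.ext_iff]
  -- positivity of μ k - β
  have hμβ : ∀ k, 0 < μ k - β := by
    intro k
    have h1 : i0 ≤ k := by simp [hi0, Fin.le_def]
    have h2 := hμmono h1
    have := hβ.2
    linarith
  have hμβbar : ∀ k, 0 < μ k - βbar := fun k => by have := hμpos k; linarith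
  -- the vector u
  set u : Fin n → ℝ := fun k => 1 / Real.sqrt (μ k - β) with hu
  have husqrt : ∀ k, 0 < Real.sqrt (μ k - β) := fun k => Real.sqrt_pos.mpr (hμβ k)
  have hupos : ∀ k, 0 < u k := fun k => one_div_pos.mpr (husqrt k)
  have husq : ∀ k, u k * u k = 1 / (μ k - β) := by
    intro k
    show 1 / Real.sqrt (μ k - β) * (1 / Real.sqrt (μ k - β)) = _
    rw [div_mul_div_comm, one_mul, Real.mul_self_sqrt (hμβ k).le]
  haveI : Nonempty (Fin n) := ⟨i0⟩
  set t : ℝ := ∑ k, u k * u k with ht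
  have htpos : 0 < t := by
    apply Finset.sum_pos (fun k _ => mul_pos (hupos k) (hupos k))
    exact Finset.univ_nonempty
  have hgt : g β = 1 + β * t := by
    rw [hg, ht]
    congr 2
    exact Finset.sum_congr rfl fun k _ => (husq k).symm
  -- positivity of g β
  have hgpos : 0 < g β := by
    have h0 : g βbar = 1 + ∑ k, βbar / (μ k - βbar) := by
      rw [hg, Finset.mul_sum]
      simp [mul_one_div, div_eq_mul_inv]
    have h1 : g β = 1 + ∑ k, β / (μ k - β) := by
      rw [hg, Finset.mul_sum]
      simp [mul_one_div, div_eq_mul_inv]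
    have hlt : ∑ k, βbar / (μ k - βbar) < ∑ k, β / (μ k - β) := by
      apply Finset.sum_lt_sum_of_nonempty Finset.univ_nonempty
      intro k _
      rw [div_lt_div_iff₀ (hμβbar k) (hμβ k)]
      nlinarith [hμpos k, hβ.1]
    have := hβbarzero
    rw [h0] at this
    rw [h1]
    linarith
  have hgne : g β ≠ 0 := hgpos.ne'
  set c : ℝ := 2 * β / g β with hc
  have hbt : β * t = g β - 1 := by rw [hgt]; ring
  have h3f : 3 - f = c * t := by
    rw [hf, hc]
    field_simp
    linarith [hbt]
  -- square root of t
  set r : ℝ := Real.sqrt t with hr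
  have hrpos : 0 < r := Real.sqrt_pos.mpr htpos
  have hrr : r * r = t := Real.mul_self_sqrt htpos.le
  set a : ℝ := u i0 with ha
  have hat : a * a < t := by
    have hsub : ({i0, i1} : Finset (Fin n)) ⊆ Finset.univ := Finset.subset_univ _
    have hle : ∑ k ∈ ({i0, i1} : Finset (Fin n)), u k * u k ≤ t := by
      rw [ht]
      exact Finset.sum_le_sum_of_subset_of_nonneg hsub
        (fun k _ _ => (mul_pos (hupos k) (hupos k)).le)
    rw [Finset.sum_pair hi01] at hle
    nlinarith [hupos i1, hupos i0]
  have har : a < r := by nlinarith [hupos i0]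
  have hrane : r - a ≠ 0 := by linarith
  -- the Householder vector
  set e0 : Fin n → ℝ := fun k => if k = i0 then 1 else 0 with he0
  set q : Fin n → ℝ := fun k => u k - r * e0 k with hqdef
  set s : ℝ := 2 * r * (r - a) with hs
  have hspos : 0 < s := by rw [hs]; nlinarith
  have hsne : s ≠ 0 := hspos.ne'
  have hue : ∑ k, u k * e0 k = a := by
    have : ∀ k, u k * e0 k = if k = i0 then u k else 0 := by
      intro k; show u k * (if k = i0 then 1 else 0) = _; split_ifs <;> ring
    rw [Finset.sum_congr rfl fun k _ => this k, Finset.sum_ite_eq' Finset.univ i0 u]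
    simp [ha]
  have hee : ∑ k, e0 k * e0 k = 1 := by
    have : ∀ k, e0 k * e0 k = if k = i0 then (1:ℝ) else 0 := by
      intro k
      show (if k = i0 then (1:ℝ) else 0) * (if k = i0 then 1 else 0) = _
      split_ifs <;> ring
    rw [Finset.sum_congr rfl fun k _ => this k,
      Finset.sum_ite_eq' Finset.univ i0 (fun _ => (1:ℝ))]
    simp
  have hqq : q ⬝ᵥ q = s := by
    simp only [dotProduct, hqdef]
    have : ∀ k, (u k - r * e0 k) * (u k - r * e0 k)
        = u k * u k - 2 * r * (u k * e0 k) + r * r * (e0 k * e0 k) := fun k => by ring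
    rw [Finset.sum_congr rfl fun k _ => this k]
    rw [Finset.sum_add_distrib, Finset.sum_sub_distrib, ← Finset.mul_sum, ← Finset.mul_sum,
      hue, hee, ← ht, hs]
    nlinarith [hrr]
  have huq : u ⬝ᵥ q = t - r * a := by
    simp only [dotProduct, hqdef]
    have : ∀ k, u k * (u k - r * e0 k) = u k * u k - r * (u k * e0 k) := fun k => by ring
    rw [Finset.sum_congr rfl fun k _ => this k, Finset.sum_sub_distrib, ← Finset.mul_sum,
      hue, ← ht]
  have hqe : q ⬝ᵥ e0 = a - r := by
    simp only [dotProduct, hqdef]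
    have : ∀ k, (u k - r * e0 k) * e0 k = u k * e0 k - r * (e0 k * e0 k) := fun k => by ring
    rw [Finset.sum_congr rfl fun k _ => this k, Finset.sum_sub_distrib, ← Finset.mul_sum,
      hue, hee]
    ring
  -- matrices
  set U : Matrix (Fin n) (Fin n) ℝ := Matrix.vecMulVec u u with hU
  set Q : Matrix (Fin n) (Fin n) ℝ := Matrix.vecMulVec q q with hQ
  set EE : Matrix (Fin n) (Fin n) ℝ := Matrix.vecMulVec e0 e0 with hEE
  set UE : Matrix (Fin n) (Fin n) ℝ := Matrix.vecMulVec u e0 with hUE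
  have hDU : D = 1 + β • U := by
    ext i j
    rw [hD]
    by_cases h : i = j
    · subst h
      simp only [Matrix.add_apply, Matrix.one_apply_eq, Matrix.smul_apply, hU,
        Matrix.vecMulVec_apply, smul_eq_mul, if_pos rfl, if_true]
      rw [husq i]
      field_simp [(hμβ i).ne']
      ring
    · simp only [Matrix.add_apply, Matrix.one_apply_ne h, Matrix.smul_apply, hU,
        Matrix.vecMulVec_apply, smul_eq_mul, if_neg h]
      rw [Real.sqrt_mul (hμβ i).le, zero_add]
      have huu : u i * u j = 1 / (Real.sqrt (μ i - β) * Real.sqrt (μ j - β)) := by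
        show 1 / Real.sqrt (μ i - β) * (1 / Real.sqrt (μ j - β)) = _
        rw [div_mul_div_comm, one_mul]
      rw [huu, mul_one_div]
  have hCU : C = f • (1 : Matrix (Fin n) (Fin n) ℝ) + c • U := by
    rw [hC, hDU, hf, hc]
    match_scalars <;> field_simp <;> ring
  -- the Householder matrix
  set H : Matrix (Fin n) (Fin n) ℝ := 1 - (2 / s) • Q with hH
  have hQQ : Q * Q = s • Q := by rw [hQ, vmv_mul, hqq]
  have hHH : H * H = 1 := by
    have hk : 2 / s * (2 / s) * s = 2 / s + 2 / s := by field_simp; ring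
    have hsq : ((2 / s) • Q) * ((2 / s) • Q) = (2 / s) • Q + (2 / s) • Q := by
      rw [Matrix.smul_mul, Matrix.mul_smul, hQQ, smul_smul, smul_smul, hk, add_smul]
    calc H * H = (1 - (2 / s) • Q) - (1 - (2 / s) • Q) * ((2 / s) • Q) := by
          rw [hH, mul_sub, mul_one]
    _ = (1 - (2 / s) • Q) - ((2 / s) • Q - ((2 / s) • Q + (2 / s) • Q)) := by
          rw [sub_mul, one_mul, hsq]
    _ = 1 := by abel
  have hHsymm : Hᵀ = H := by
    rw [hH, Matrix.transpose_sub, Matrix.transpose_one, Matrix.transpose_smul, hQ,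
      vmv_transpose]
  -- sign flip
  set E : Matrix (Fin n) (Fin n) ℝ := Matrix.diagonal (fun k => if k = i1 then (-1:ℝ) else 1)
    with hE
  have hEsymm : Eᵀ = E := Matrix.diagonal_transpose _
  have hEE1 : E * E = 1 := by
    rw [hE, Matrix.diagonal_mul_diagonal]
    have : (fun k => (if k = i1 then (-1:ℝ) else 1) * (if k = i1 then (-1:ℝ) else 1))
        = fun _ => (1:ℝ) := by
      funext k; split_ifs <;> ring
    rw [this, Matrix.diagonal_one]
  set T : Matrix (Fin n) (Fin n) ℝ := H * E with hT
  -- orthogonality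
  have hTT : T * Tᵀ = 1 := by
    rw [hT, Matrix.transpose_mul, hEsymm, hHsymm]
    calc H * E * (E * H) = H * (E * E) * H := by rw [← mul_assoc, mul_assoc H E E]
    _ = 1 := by rw [hEE1, mul_one, hHH]
  -- determinant
  have hdetE : E.det = -1 := by
    rw [hE, Matrix.det_diagonal, Finset.prod_ite_eq' Finset.univ i1 (fun _ => (-1:ℝ))]
    simp
  have hdetH : H.det = -1 := by
    have hrw : H = 1 + Matrix.replicateCol Unit ((-(2 / s)) • q) * Matrix.replicateRow Unit q := by
      rw [← Matrix.vecMulVec_eq, hH, hQ]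
      have : Matrix.vecMulVec ((-(2 / s)) • q) q = -((2 / s) • Matrix.vecMulVec q q) := by
        ext i j
        simp [Matrix.vecMulVec_apply]
        ring
      rw [this]
      abel
    rw [hrw, Matrix.det_one_add_replicateCol_mul_replicateRow]
    rw [dotProduct_smul, hqq]
    simp only [smul_eq_mul]
    field_simp
    ring
  have hdetT : T.det = 1 := by
    rw [hT, Matrix.det_mul, hdetH, hdetE]
    ring
  -- the diagonal matrix
  set Λ : Matrix (Fin n) (Fin n) ℝ :=
    Matrix.diagonal (fun i : Fin n => if i = i0 then 3 else f) with hΛ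
  have hΛE : Λ = f • (1 : Matrix (Fin n) (Fin n) ℝ) + (3 - f) • EE := by
    ext i j
    simp only [hΛ, Matrix.diagonal_apply, Matrix.add_apply, Matrix.smul_apply, hEE,
      Matrix.vecMulVec_apply, smul_eq_mul, Matrix.one_apply, he0]
    by_cases h : i = j
    · subst h
      by_cases h0 : i = i0 <;> simp [h0] <;> ring
    · have h2 : ¬(i = i0 ∧ j = i0) := by
        rintro ⟨rfl, rfl⟩; exact h rfl
      simp only [if_neg h]
      split_ifs with hh1 hh2 <;> try ring
      · exact absurd ⟨hh1, hh2⟩ h2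
  -- eigen decomposition: C * H = H * Λ
  have hUQ : U * Q = (t - r * a) • Matrix.vecMulVec u q := by rw [hU, hQ, vmv_mul, huq]
  have hQE : Q * EE = (a - r) • Matrix.vecMulVec q e0 := by rw [hQ, hEE, vmv_mul, hqe]
  have huqq : Matrix.vecMulVec u q = U - r • UE := by
    ext i j
    simp only [hqdef, Matrix.vecMulVec_apply, Matrix.sub_apply, Matrix.smul_apply, hU, hUE,
      smul_eq_mul]
    ring
  have hqee : Matrix.vecMulVec q e0 = UE - r • EE := by
    ext i j
    simp only [hqdef, Matrix.vecMulVec_apply, Matrix.sub_apply, Matrix.smul_apply, hUE, hEE,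
      smul_eq_mul]
    ring
  have hfval : f = 3 - c * (r * r) := by rw [hrr]; linarith
  have hCH : C * H = H * Λ := by
    have e1 : (f • (1 : Matrix (Fin n) (Fin n) ℝ) + c • U) * ((2 / s) • Q)
        = (f * (2 / s)) • Q + (c * ((2 / s) * (t - r * a))) • (U - r • UE) := by
      simp only [add_mul, Matrix.smul_mul, Matrix.mul_smul, one_mul, mul_one]
      rw [hUQ, huqq]
      match_scalars <;> ring
    have e2 : ((2 / s) • Q) * (f • (1 : Matrix (Fin n) (Fin n) ℝ) + (3 - f) • EE)
        = ((2 / s) * f) • Q + ((2 / s) * ((3 - f) * (a - r))) • (UE - r • EE) := by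
      simp only [mul_add, Matrix.smul_mul, Matrix.mul_smul, one_mul, mul_one]
      rw [hQE, hqee]
      match_scalars <;> ring
    have lhs : C * H = (f • (1 : Matrix (Fin n) (Fin n) ℝ) + c • U)
        - ((f * (2 / s)) • Q + (c * ((2 / s) * (t - r * a))) • (U - r • UE)) := by
      rw [hCU, hH, mul_sub, mul_one, e1]
    have rhs : H * Λ = (f • (1 : Matrix (Fin n) (Fin n) ℝ) + (3 - f) • EE)
        - (((2 / s) * f) • Q + ((2 / s) * ((3 - f) * (a - r))) • (UE - r • EE)) := by
      rw [hΛE, hH, sub_mul, one_mul, e2]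
    rw [lhs, rhs, ← hrr]
    match_scalars <;> simp only [hfval, hs] <;> field_simp <;> ring
  have hEΛ : E * Λ = Λ * E := by
    rw [hE, hΛ, Matrix.diagonal_mul_diagonal, Matrix.diagonal_mul_diagonal]
    exact congrArg Matrix.diagonal (funext fun k => mul_comm _ _)
  have hCT : C * T = T * Λ := by
    rw [hT, ← mul_assoc, hCH, mul_assoc, ← hEΛ, ← mul_assoc]
  -- conclusion
  refine ⟨T, hTT, hdetT, ?_⟩
  have hTinv : T⁻¹ = Tᵀ := Matrix.inv_eq_right_inv hTT
  have hTTl : Tᵀ * T = 1 := mul_eq_one_comm.mp hTT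
  calc T⁻¹ * C * T = Tᵀ * (C * T) := by rw [hTinv, mul_assoc]
  _ = Tᵀ * (T * Λ) := by rw [hCT]
  _ = (Tᵀ * T) * Λ := by rw [← mul_assoc]
  _ = Λ := by rw [hTTl, one_mul]
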